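/- Let 𝕂 ∈ {ℝ, ℂ} and let X be a normed space over 𝕂 whose density character dens(X) equals κ, where κ ≥ ℵ₀ is a regular cardinal satisfying 2^{<κ} = κ. Let UWD_κ denote the set of all κ-sequences (x_α)_{α<κ} in X such that (i) the set {‖x_α‖ : α < κ} is unbounded, and (ii) the set {x_α : α < κ} is dense in X for the weak topology σ(X,X*). Then UWD_κ is 2^κ-lineable as a subset of the vector space X^κ. -/

import Mathlib

open Cardinal

universe u

/-- The density character of a topological space: the least cardinality of a dense subset. -/
noncomputable def densityCharacter (X : Type u) [TopologicalSpace X] : Cardinal.{u} :=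
  sInf { c : Cardinal.{u} | ∃ s : Set X, Dense s ∧ Cardinal.mk s = c }

/-- The weak topology `σ(X, X*)` on a normed space `X` over `𝕜`: the initial topology induced
by all continuous linear functionals on `X`. -/
noncomputable def weakTopology (𝕜 : Type) (X : Type u) [RCLike 𝕜]
    [NormedAddCommGroup X] [NormedSpace 𝕜 X] : TopologicalSpace X :=
  ⨅ φ : X →L[𝕜] 𝕜, TopologicalSpace.induced φ inferInstance

-- separation lemma
lemma sep_finset {S : Type u} (t : Finset (Set S)) :
    ∃ s : Finset S, ∀ x ∈ t, ∀ y ∈ t, x ≠ y → ∃ w ∈ s, ¬ (w ∈ x ↔ w ∈ y) := by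
  classical
  have key : ∀ x y : Set S, x ≠ y → ∃ w : S, ¬ (w ∈ x ↔ w ∈ y) := by
    intro x y h
    by_contra hc
    push_neg at hc
    exact h (Set.ext fun w => hc w)
  refine ⟨(t ×ˢ t).biUnion (fun p => if h : p.1 ≠ p.2 then {(key p.1 p.2 h).choose} else ∅), ?_⟩
  intro x hx y hy hxy
  refine ⟨(key x y hxy).choose, ?_, (key x y hxy).choose_spec⟩
  refine Finset.mem_biUnion.mpr ⟨(x, y), Finset.mem_product.mpr ⟨hx, hy⟩, ?_⟩
  rw [dif_pos hxy]
  exact Finset.mem_singleton_self _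

theorem aux (𝕜 : Type) [RCLike 𝕜] (X : Type u)
    [NormedAddCommGroup X] [NormedSpace 𝕜 X]
    (hX : ∃ v : X, v ≠ 0) (P : Type u) [Infinite P]
    (e0 : ∃ D : Set X, Dense D ∧ #D = #P) :
    ∃ W : Submodule 𝕜 (P → X),
      Module.rank 𝕜 ↥W = 2 ^ #P ∧
      ∀ x ∈ W, x ≠ 0 →
        (¬ ∃ C : ℝ, ∀ α : P, ‖x α‖ ≤ C) ∧
        @Dense X (weakTopology 𝕜 X) (Set.range x) := by
  classical
  obtain ⟨D, hD, hDP⟩ := e0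
  obtain ⟨g⟩ : Nonempty (P ≃ D) := Cardinal.eq.mp hDP.symm
  set e : P → X := fun p => (g p : X) with he
  have hre : Set.range e = D := by
    rw [he]
    have : Set.range (fun p => (g p : X)) = Set.range (Subtype.val : D → X) := by
      ext w
      constructor
      · rintro ⟨p, rfl⟩; exact ⟨g p, rfl⟩
      · rintro ⟨d, rfl⟩; exact ⟨g.symm d, by simp⟩
    rw [this, Subtype.range_coe]
  have hdense_e : Dense (Set.range e) := hre ▸ hD
  have henz : ∃ β : P, e β ≠ 0 := by
    obtain ⟨v, hv⟩ := hX
    obtain ⟨w, hw1, β, rfl⟩ := Metric.dense_iff.mp hdense_e v ‖v‖ (norm_pos_iff.mpr hv)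
    refine ⟨β, fun h => ?_⟩
    rw [Metric.mem_ball, h, dist_zero_left] at hw1
    exact lt_irrefl _ hw1
  set Q := Finset P × Finset (Finset P) with hQ
  have hmkQ : #(Q × P) = #P := by
    have h1 : #(Finset P) = #P := Cardinal.mk_finset_of_infinite P
    have h2 : #(Finset (Finset P)) = #P := by
      rw [Cardinal.mk_finset_of_infinite, h1]
    have hQP : #Q = #P := by
      rw [hQ, Cardinal.mk_prod, Cardinal.lift_id, Cardinal.lift_id, h1, h2,
        Cardinal.mul_eq_self (Cardinal.aleph0_le_mk P)]
    rw [Cardinal.mk_prod, Cardinal.lift_id, Cardinal.lift_id, hQP,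
      Cardinal.mul_eq_self (Cardinal.aleph0_le_mk P)]
  obtain ⟨ψ⟩ : Nonempty (P ≃ Q × P) := Cardinal.eq.mp hmkQ.symm
  set tr : Set P → Finset P → Finset P := fun x s => s.filter (· ∈ x) with htr
  set A : Set P → Set Q := fun x => {q | tr x q.1 ∈ q.2} with hA
  set f : Set P → (P → X) := fun x p => if (ψ p).1 ∈ A x then e (ψ p).2 else 0 with hf
  have key : ∀ c : Set P →₀ 𝕜, c ≠ 0 →
      ∃ a : 𝕜, a ≠ 0 ∧ ∀ β : P, ∃ p : P, (c.sum fun x t => t • f x) p = a • e β := by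
    intro c hc
    obtain ⟨x₀, hx₀⟩ := Finsupp.support_nonempty_iff.mpr hc
    obtain ⟨s, hs⟩ := sep_finset c.support
    refine ⟨c x₀, Finsupp.mem_support_iff.mp hx₀, fun β => ?_⟩
    set q : Q := (s, {tr x₀ s}) with hq
    refine ⟨ψ.symm (q, β), ?_⟩
    have hmem : ∀ x ∈ c.support, (q ∈ A x ↔ x = x₀) := by
      intro x hx
      constructor
      · intro hqa
        by_contra hne
        obtain ⟨w, hw, hwx⟩ := hs x hx x₀ hx₀ hne
        have htreq : tr x s = tr x₀ s := Finset.mem_singleton.mp hqa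
        apply hwx
        constructor
        · intro h'
          have h2 : w ∈ tr x s := Finset.mem_filter.mpr ⟨hw, h'⟩
          rw [htreq] at h2
          exact (Finset.mem_filter.mp h2).2
        · intro h'
          have h2 : w ∈ tr x₀ s := Finset.mem_filter.mpr ⟨hw, h'⟩
          rw [← htreq] at h2
          exact (Finset.mem_filter.mp h2).2
      · rintro rfl
        exact Finset.mem_singleton_self _
    have hfp : ∀ x ∈ c.support, f x (ψ.symm (q, β)) = if x = x₀ then e β else 0 := by
      intro x hx
      rw [hf]
      simp only [Equiv.apply_symm_apply]
      by_cases hxx : x = x₀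
      · rw [if_pos ((hmem x hx).mpr hxx), if_pos hxx]
      · rw [if_neg (fun h => hxx ((hmem x hx).mp h)), if_neg hxx]
    rw [Finsupp.sum, Finset.sum_apply, Finset.sum_congr rfl
      (fun x hx => by rw [Pi.smul_apply, hfp x hx])]
    rw [Finset.sum_eq_single x₀
      (fun x _ hne => by rw [if_neg hne, smul_zero])
      (fun h => absurd hx₀ h)]
    rw [if_pos rfl]
  have hli : LinearIndependent 𝕜 f := by
    rw [linearIndependent_iff]
    intro l hl
    by_contra hne
    obtain ⟨a, ha, hav⟩ := key l hne
    obtain ⟨β, hβ⟩ := henz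
    obtain ⟨p, hp⟩ := hav β
    rw [← Finsupp.linearCombination_apply, hl] at hp
    exact hβ ((smul_eq_zero.mp hp.symm).resolve_left ha)
  refine ⟨Submodule.span 𝕜 (Set.range f), ?_, ?_⟩
  · rw [rank_span hli, Cardinal.mk_range_eq f hli.injective, Cardinal.mk_set]
  · intro y hy hyne
    rw [Finsupp.mem_span_range_iff_exists_finsupp] at hy
    obtain ⟨c, hc⟩ := hy
    have hcne : c ≠ 0 := by
      rintro rfl
      exact hyne (by rw [← hc]; simp)
    obtain ⟨a, ha, hav⟩ := key c hcne
    have hsub : (fun v : X => a • v) '' Set.range e ⊆ Set.range y := by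
      rintro _ ⟨_, ⟨β, rfl⟩, rfl⟩
      obtain ⟨p, hp⟩ := hav β
      exact ⟨p, by rw [← hc]; exact hp⟩
    have hdense_im : Dense ((fun v : X => a • v) '' Set.range e) := by
      have himg := (Homeomorph.smulOfNeZero a ha (α := X)).image_closure (Set.range e)
      rw [hdense_e.closure_eq, Set.image_univ] at himg
      rw [dense_iff_closure_eq,
        show (fun v : X => a • v) = ⇑(Homeomorph.smulOfNeZero a ha (α := X)) from rfl,
        ← himg, (Homeomorph.smulOfNeZero a ha (α := X)).surjective.range_eq]
    have hdense_y : Dense (Set.range y) := hdense_im.mono hsub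
    constructor
    · rintro ⟨C, hC⟩
      obtain ⟨v, hv⟩ := hX
      have hnv : (0:ℝ) < ‖v‖ := norm_pos_iff.mpr hv
      set r : ℝ := (|C| + 2) / ‖v‖ with hr
      have hrpos : 0 < r := by positivity
      set v' : X := ((r : 𝕜)) • v with hv'
      have hnv' : ‖v'‖ = |C| + 2 := by
        rw [hv', norm_smul, RCLike.norm_ofReal, abs_of_pos hrpos, hr,
          div_mul_cancel₀ _ (ne_of_gt hnv)]
      obtain ⟨w, hw1, p, rfl⟩ := Metric.dense_iff.mp hdense_y v' 1 one_pos
      have h1 : ‖v' - y p‖ < 1 := by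
        rw [norm_sub_rev, ← dist_eq_norm]
        exact Metric.mem_ball.mp hw1
      have h2 := norm_sub_norm_le v' (y p)
      have h3 := hC p
      have h4 := le_abs_self C
      rw [hnv'] at h2
      linarith
    · have hle : (inferInstance : TopologicalSpace X) ≤ weakTopology 𝕜 X := by
        refine le_iInf fun φ => ?_
        exact continuous_iff_le_induced.mp φ.continuous
      rw [@dense_iff_inter_open X (weakTopology 𝕜 X) (Set.range y)]
      intro U hU hUne
      exact (dense_iff_inter_open.mp hdense_y) U (hle U hU) hUne

theorem statement3 (𝕜 : Type) [RCLike 𝕜] (X : Type u)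
    [NormedAddCommGroup X] [NormedSpace 𝕜 X]
    (κ : Cardinal.{u}) (hreg : κ.IsRegular)
    (hdens : densityCharacter X = κ) (hpow : (2 : Cardinal.{u}) ^< κ = κ) :
    ∃ W : Submodule 𝕜 (κ.ord.ToType → X),
      Module.rank 𝕜 ↥W = 2 ^ κ ∧
      ∀ x ∈ W, x ≠ 0 →
        (¬ ∃ C : ℝ, ∀ α : κ.ord.ToType, ‖x α‖ ≤ C) ∧
        @Dense X (weakTopology 𝕜 X) (Set.range x) := by
  classical
  have hκ0 : ℵ₀ ≤ κ := hreg.aleph0_le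
  have hmkS : #(κ.ord.ToType) = κ := Cardinal.mk_ord_toType κ
  have hinf : Infinite κ.ord.ToType := by rw [Cardinal.infinite_iff, hmkS]; exact hκ0
  have hX : ∃ v : X, v ≠ 0 := by
    by_contra h
    push_neg at h
    have hsub : #(Set.univ : Set X) ≤ 1 := by
      rw [Cardinal.le_one_iff_subsingleton]
      exact ⟨fun a b => by rw [Subtype.ext_iff]; rw [h a, h b]⟩
    have hmem : densityCharacter X ≤ #(Set.univ : Set X) :=
      csInf_le' ⟨Set.univ, dense_univ, rfl⟩
    rw [hdens] at hmem
    exact (not_le_of_gt (Cardinal.one_lt_aleph0.trans_le hκ0)) (hmem.trans hsub)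
  have e0 : ∃ D : Set X, Dense D ∧ #D = #(κ.ord.ToType) := by
    have hne : {c : Cardinal.{u} | ∃ s : Set X, Dense s ∧ #s = c}.Nonempty :=
      ⟨#(Set.univ : Set X), Set.univ, dense_univ, rfl⟩
    obtain ⟨D, hD, hDc⟩ := csInf_mem hne
    refine ⟨D, hD, ?_⟩
    rw [hDc, hmkS]
    exact hdens
  obtain ⟨W, hW1, hW2⟩ := aux 𝕜 X hX κ.ord.ToType e0
  exact ⟨W, by rw [hW1, hmkS], hW2⟩
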